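/- arXiv:2103.10318 — 3 statements merged into one kernel-verified Lean document; each statement's English description precedes it below -/
import Mathlib

section
/- Let $M \in \mathbb{R}^{4\times 6}$ be the hexrotor actuation matrix with rows $(1,1,1,1,1,1)$, $(-r/2, -r, -r/2, r/2, r, r/2)$, $(r\sqrt{3}/2, 0, -r\sqrt{3}/2, -r\sqrt{3}/2, 0, r\sqrt{3}/2)$, $(c, -c, c, -c, c, -c)$ with $r, c > 0$. For each $i \in \{1,\dots,6\}$, let $\mathcal{F}^{(i)} = \mathrm{diag}(d_1,\dots,d_6)$ with $d_j = 0$ if $j = i$ and $d_j = 1$ otherwise. Then $M\mathcal{F}^{(i)}$ has rank 4. -/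
/-- The hexrotor actuation matrix. -/
noncomputable def Mhex (r c : ℝ) : Matrix (Fin 4) (Fin 6) ℝ :=
  Matrix.of
    ![![1, 1, 1, 1, 1, 1],
      ![-r / 2, -r, -r / 2, r / 2, r, r / 2],
      ![r * Real.sqrt 3 / 2, 0, -(r * Real.sqrt 3 / 2),
        -(r * Real.sqrt 3 / 2), 0, r * Real.sqrt 3 / 2],
      ![c, -c, c, -c, c, -c]]

/-- The single-rotor failure matrix `𝓕⁽ⁱ⁾`. -/
noncomputable def Fm (i : Fin 6) : Matrix (Fin 6) (Fin 6) ℝ :=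
  Matrix.diagonal fun j => if j = i then 0 else 1

lemma Fm_apply (i j k : Fin 6) : Fm i j k = if j = k then (if j = i then 0 else 1) else 0 := by
  simp [Fm, Matrix.diagonal_apply]

/-- If some 4 columns of `Mhex`, all different from `i`, form an invertible `4 × 4`
matrix, then `Mhex r c * Fm i` has rank `4`. -/
lemma rank_aux (r c : ℝ) (i : Fin 6) (g : Fin 4 → Fin 6) (hg : ∀ k, g k ≠ i)
    (hdet : ((Mhex r c).submatrix id g).det ≠ 0) : (Mhex r c * Fm i).rank = 4 := by
  have key : (Mhex r c * Fm i) * (Matrix.of fun j k => if g k = j then (1:ℝ) else 0)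
      = (Mhex r c).submatrix id g := by
    ext a k
    simp only [Matrix.mul_apply, Matrix.of_apply, mul_ite, mul_one, mul_zero,
      Finset.sum_ite_eq, Finset.mem_univ, if_true, Matrix.submatrix_apply, id_eq]
    rw [Finset.sum_eq_single (g k)]
    · simp [Fm_apply, hg k]
    · intro b _ hb
      simp [Fm_apply, hb]
    · simp
  have h4 : ((Mhex r c).submatrix id g).rank = 4 := by
    rw [Matrix.rank_of_isUnit _ ((Matrix.isUnit_iff_isUnit_det _).2 (isUnit_iff_ne_zero.2 hdet))]
    simp
  refine le_antisymm ((Matrix.rank_le_card_height _).trans (by simp)) ?_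
  calc (4:ℕ) = ((Mhex r c).submatrix id g).rank := h4.symm
    _ = ((Mhex r c * Fm i) * (Matrix.of fun j k => if g k = j then (1:ℝ) else 0)).rank := by rw [key]
    _ ≤ (Mhex r c * Fm i).rank := Matrix.rank_mul_le_left _ _

set_option maxHeartbeats 2000000 in
/-- With any single actuator removed, the actuation map remains surjective. -/
theorem stmt9 (r c : ℝ) (hr : 0 < r) (hc : 0 < c) (i : Fin 6) :
    (Mhex r c * Fm i).rank = 4 := by
  have hs : (0:ℝ) < Real.sqrt 3 := Real.sqrt_pos.mpr (by norm_num)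
  fin_cases i
  · refine rank_aux r c _ ![1,2,3,4] (by decide) ?_
    have e : ((Mhex r c).submatrix id ![1,2,3,4]).det = 3 * (r * r * c * Real.sqrt 3) := by
      simp [Mhex, Matrix.det_succ_row_zero, Fin.sum_univ_succ]
      simp [Fin.succAbove, Fin.lt_def]
      ring
    rw [e]; positivity
  · refine rank_aux r c _ ![0,2,3,4] (by decide) ?_
    have e : ((Mhex r c).submatrix id ![0,2,3,4]).det = 3 * (r * r * c * Real.sqrt 3) := by
      simp [Mhex, Matrix.det_succ_row_zero, Fin.sum_univ_succ]
      simp [Fin.succAbove, Fin.lt_def]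
      ring
    rw [e]; positivity
  · refine rank_aux r c _ ![0,1,3,5] (by decide) ?_
    have e : ((Mhex r c).submatrix id ![0,1,3,5]).det = -3 * (r * r * c * Real.sqrt 3) := by
      have h1 : (![(1:ℝ), 1, 1, 1, 1, 1] : Fin 6 → ℝ) 5 = 1 := rfl
      have h2 : (![-r / 2, -r, -r / 2, r / 2, r, r / 2] : Fin 6 → ℝ) 5 = r / 2 := rfl
      have h3 : (![r * Real.sqrt 3 / 2, 0, -(r * Real.sqrt 3 / 2), -(r * Real.sqrt 3 / 2), 0,
          r * Real.sqrt 3 / 2] : Fin 6 → ℝ) 5 = r * Real.sqrt 3 / 2 := rfl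
      have h4 : (![c, -c, c, -c, c, -c] : Fin 6 → ℝ) 5 = -c := rfl
      simp [Mhex, Matrix.det_succ_row_zero, Fin.sum_univ_succ, h1, h2, h3, h4]
      simp [Fin.succAbove, Fin.lt_def]
      ring
    rw [e]; exact mul_ne_zero (by norm_num) (by positivity)
  · refine rank_aux r c _ ![0,1,2,4] (by decide) ?_
    have e : ((Mhex r c).submatrix id ![0,1,2,4]).det = -3 * (r * r * c * Real.sqrt 3) := by
      simp [Mhex, Matrix.det_succ_row_zero, Fin.sum_univ_succ]
      simp [Fin.succAbove, Fin.lt_def]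
      ring
    rw [e]; exact mul_ne_zero (by norm_num) (by positivity)
  · refine rank_aux r c _ ![0,1,2,3] (by decide) ?_
    have e : ((Mhex r c).submatrix id ![0,1,2,3]).det = -3 * (r * r * c * Real.sqrt 3) := by
      simp [Mhex, Matrix.det_succ_row_zero, Fin.sum_univ_succ]
      simp [Fin.succAbove, Fin.lt_def]
      ring
    rw [e]; exact mul_ne_zero (by norm_num) (by positivity)
  · refine rank_aux r c _ ![0,1,2,3] (by decide) ?_
    have e : ((Mhex r c).submatrix id ![0,1,2,3]).det = -3 * (r * r * c * Real.sqrt 3) := by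
      simp [Mhex, Matrix.det_succ_row_zero, Fin.sum_univ_succ]
      simp [Fin.succAbove, Fin.lt_def]
      ring
    rw [e]; exact mul_ne_zero (by norm_num) (by positivity)
end

section
/- With $M$ and $\mathcal{F}^{(i)}$ as above ($r, c > 0$, single-rotor failure matrix), for each $i \in \{1,\dots,6\}$ the matrix $(M\mathcal{F}^{(i)})(M\mathcal{F}^{(i)})^\top \in \mathbb{R}^{4\times 4}$ is invertible, so the pseudo-inverse $(M\mathcal{F}^{(i)})^\dagger = (M\mathcal{F}^{(i)})^\top((M\mathcal{F}^{(i)})(M\mathcal{F}^{(i)})^\top)^{-1}$ is well defined and satisfies $(M\mathcal{F}^{(i)})(M\mathcal{F}^{(i)})^\dagger = I_4$. -/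
open Matrix

lemma gram (r c : ℝ) (i : Fin 6) (a b : Fin 4) :
    (Mhex r c * Fm i * (Mhex r c * Fm i)ᵀ) a b
      = (∑ j, Mhex r c a j * Mhex r c b j) - Mhex r c a i * Mhex r c b i := by
  have hAB : ∀ (a : Fin 4) (j : Fin 6),
      (Mhex r c * Fm i) a j = if j = i then 0 else Mhex r c a j := by
    intro a j
    rw [Fm, Matrix.mul_diagonal]
    split <;> simp
  rw [Matrix.mul_apply]
  simp only [Matrix.transpose_apply, hAB]
  have h : ∀ j : Fin 6,
      (if j = i then (0:ℝ) else Mhex r c a j) * (if j = i then 0 else Mhex r c b j)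
        = Mhex r c a j * Mhex r c b j - (if j = i then Mhex r c a j * Mhex r c b j else 0) := by
    intro j; split <;> simp
  simp only [h, Finset.sum_sub_distrib, Finset.sum_ite_eq', Finset.mem_univ, if_true]

lemma vec6_five (a b c d e f : ℝ) : ![a,b,c,d,e,f] 5 = f := rfl

lemma dots (r c : ℝ) (a b : Fin 4) :
    (∑ j, Mhex r c a j * Mhex r c b j)
      = !![(6:ℝ),0,0,0; 0,3*r^2,0,0; 0,0,3*r^2,0; 0,0,0,6*c^2] a b := by
  have hs : Real.sqrt 3 * Real.sqrt 3 = 3 := Real.mul_self_sqrt (by norm_num)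
  fin_cases a <;> fin_cases b <;>
    simp [Mhex, Fin.sum_univ_six, vec6_five, Matrix.vecHead, Matrix.vecTail] <;>
    nlinarith [hs]

lemma my_det_fin_four (A : Matrix (Fin 4) (Fin 4) ℝ) :
    A.det =
      A 0 0 * (A 1 1 * (A 2 2 * A 3 3 - A 2 3 * A 3 2) -
               A 1 2 * (A 2 1 * A 3 3 - A 2 3 * A 3 1) +
               A 1 3 * (A 2 1 * A 3 2 - A 2 2 * A 3 1)) -
      A 0 1 * (A 1 0 * (A 2 2 * A 3 3 - A 2 3 * A 3 2) -
               A 1 2 * (A 2 0 * A 3 3 - A 2 3 * A 3 0) +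
               A 1 3 * (A 2 0 * A 3 2 - A 2 2 * A 3 0)) +
      A 0 2 * (A 1 0 * (A 2 1 * A 3 3 - A 2 3 * A 3 1) -
               A 1 1 * (A 2 0 * A 3 3 - A 2 3 * A 3 0) +
               A 1 3 * (A 2 0 * A 3 1 - A 2 1 * A 3 0)) -
      A 0 3 * (A 1 0 * (A 2 1 * A 3 2 - A 2 2 * A 3 1) -
               A 1 1 * (A 2 0 * A 3 2 - A 2 2 * A 3 0) +
               A 1 2 * (A 2 0 * A 3 1 - A 2 1 * A 3 0)) := by
  rw [Matrix.det_succ_row_zero]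
  simp [Fin.sum_univ_succ, Matrix.det_fin_three, Matrix.submatrix, Fin.succAbove,
    show (Fin.succ 2 : Fin 4) = 3 from rfl, show (Fin.castSucc 2 : Fin 4) = 2 from rfl]
  norm_num [show ((1:Fin 4) < 3) from by decide]
  ring

lemma det_aux (r c : ℝ) (i : Fin 6) :
    (Mhex r c * Fm i * (Mhex r c * Fm i)ᵀ).det = 108 * r ^ 4 * c ^ 2 := by
  have hs2 : Real.sqrt 3 ^ 2 = 3 := Real.sq_sqrt (by norm_num)
  have hs4 : Real.sqrt 3 ^ 4 = 9 := by
    rw [show (4:ℕ) = 2*2 from rfl, pow_mul, hs2]; norm_num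
  rw [my_det_fin_four]
  simp only [_root_.gram, dots r c]
  norm_num
  fin_cases i <;>
  · simp [Mhex, vec6_five, Matrix.vecHead, Matrix.vecTail]
    ring_nf
    try simp only [hs2, hs4]
    try ring
    try norm_num

/-- The pseudo-inverse of `M𝓕⁽ⁱ⁾` is well defined and is a right inverse. -/
theorem stmt10 (r c : ℝ) (hr : 0 < r) (hc : 0 < c) (i : Fin 6) :
    IsUnit (Mhex r c * Fm i * (Mhex r c * Fm i)ᵀ) ∧
    (Mhex r c * Fm i) *
      ((Mhex r c * Fm i)ᵀ * (Mhex r c * Fm i * (Mhex r c * Fm i)ᵀ)⁻¹) = 1 := by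
  have hne : (Mhex r c * Fm i * (Mhex r c * Fm i)ᵀ).det ≠ 0 := by
    rw [det_aux]; positivity
  have hunit : IsUnit (Mhex r c * Fm i * (Mhex r c * Fm i)ᵀ).det := isUnit_iff_ne_zero.2 hne
  refine ⟨(Matrix.isUnit_iff_isUnit_det _).2 hunit, ?_⟩
  rw [← Matrix.mul_assoc]
  exact Matrix.mul_nonsing_inv _ hunit
end

section
/- Let $M \in \mathbb{R}^{4\times 6}$ be the hexrotor actuation matrix as above with $r, c > 0$, and for $i \in \{1,2,3\}$ let $\mathcal{F}$ be the diagonal matrix zeroing out columns $i$ and $i+3$ (the failed rotor and the rotor opposite it). Then the torque submatrix (rows 2–4 of $M\mathcal{F}$) has rank at most 2; in particular the linearized attitude system $\dot\theta = A\theta + bBM\mathcal{F}\omega_s$ is not controllable. -/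
open Matrix


/-- The failure matrix zeroing out the failed rotor `i` and the rotor `i+3`
opposite it. -/
noncomputable def Fopp (i : Fin 3) : Matrix (Fin 6) (Fin 6) ℝ :=
  Matrix.diagonal fun j => if (j : ℕ) = (i : ℕ) ∨ (j : ℕ) = (i : ℕ) + 3 then 0 else 1

/-- Torque submatrix (rows 2–4) of `M𝓕`. -/
noncomputable def Tq (r c : ℝ) (i : Fin 3) : Matrix (Fin 3) (Fin 6) ℝ :=
  Matrix.of fun k j => (Mhex r c * Fopp i) k.succ j

lemma aux_rank {m n : Type*} [Fintype m] [Fintype n] [DecidableEq m]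
    (M : Matrix m n ℝ) (v : m → ℝ) (hv : v ≠ 0) (h : v ᵥ* M = 0) :
    M.rank < Fintype.card m := by
  rw [← Matrix.rank_transpose]
  have hker : v ∈ LinearMap.ker Mᵀ.mulVecLin := by
    simpa [Matrix.mulVec_transpose] using h
  have h1 := LinearMap.finrank_range_add_finrank_ker Mᵀ.mulVecLin
  have h2 : Module.finrank ℝ (m → ℝ) = Fintype.card m := by simp
  have h3 : 0 < Module.finrank ℝ (LinearMap.ker Mᵀ.mulVecLin) := by
    apply Module.finrank_pos_iff.mpr
    exact ⟨⟨v, hker⟩, 0, by simpa [Subtype.ext_iff] using hv⟩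
  rw [Matrix.rank]
  omega

lemma exists_left_null (r c : ℝ) (hr : 0 < r) (hc : 0 < c) (i : Fin 3) :
    ∃ v : Fin 3 → ℝ, v ≠ 0 ∧ v ᵥ* Tq r c i = 0 := by
  have h3 : Real.sqrt 3 * Real.sqrt 3 = 3 := Real.mul_self_sqrt (by norm_num)
  fin_cases i
  · refine ⟨![c, -(Real.sqrt 3 * c), -r], ?_, ?_⟩
    · intro h
      have := congrFun h 0
      simp at this
      exact hc.ne' this
    · funext j
      fin_cases j <;>
        norm_num [Tq, Mhex, Fopp, Matrix.vecMul, dotProduct, Matrix.mul_diagonal,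
          Fin.sum_univ_three, Matrix.cons_val_two, Matrix.tail_cons, Matrix.head_cons] <;>
      first
        | ring1
        | linear_combination (r * c / 2) * h3
        | linear_combination (-(r * c) / 2) * h3
        | linear_combination (r * c) * h3
        | linear_combination (-(r * c)) * h3
        | linear_combination (2 * (r * c)) * h3
        | linear_combination (-(2 * (r * c))) * h3
        | linear_combination (3 * (r * c) / 2) * h3
        | linear_combination (-(3 * (r * c)) / 2) * h3
  · refine ⟨![2 * c, 0, r], ?_, ?_⟩
    · intro h
      have := congrFun h 0
      simp at this
      exact hc.ne' (by linarith)
    · funext j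
      fin_cases j <;>
        norm_num [Tq, Mhex, Fopp, Matrix.vecMul, dotProduct, Matrix.mul_diagonal,
          Fin.sum_univ_three, Matrix.cons_val_two, Matrix.tail_cons, Matrix.head_cons] <;>
      first
        | ring1
        | linear_combination (r * c / 2) * h3
        | linear_combination (-(r * c) / 2) * h3
        | linear_combination (r * c) * h3
        | linear_combination (-(r * c)) * h3
        | linear_combination (2 * (r * c)) * h3
        | linear_combination (-(2 * (r * c))) * h3
        | linear_combination (3 * (r * c) / 2) * h3
        | linear_combination (-(3 * (r * c)) / 2) * h3
  · refine ⟨![c, Real.sqrt 3 * c, -r], ?_, ?_⟩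
    · intro h
      have := congrFun h 0
      simp at this
      exact hc.ne' this
    · funext j
      fin_cases j <;>
        norm_num [Tq, Mhex, Fopp, Matrix.vecMul, dotProduct, Matrix.mul_diagonal,
          Fin.sum_univ_three, Matrix.cons_val_two, Matrix.tail_cons, Matrix.head_cons] <;>
      first
        | ring1
        | linear_combination (r * c / 2) * h3
        | linear_combination (-(r * c) / 2) * h3
        | linear_combination (r * c) * h3
        | linear_combination (-(r * c)) * h3
        | linear_combination (2 * (r * c)) * h3
        | linear_combination (-(2 * (r * c))) * h3
        | linear_combination (3 * (r * c) / 2) * h3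
        | linear_combination (-(3 * (r * c)) / 2) * h3

/-- Disabling the opposite rotor as well loses torque authority: the torque
submatrix has rank at most `2` and the linearized attitude system is not
controllable. -/
theorem stmt13 (r c b : ℝ) (hr : 0 < r) (hc : 0 < c) (hb : 0 < b)
    (J : Matrix (Fin 3) (Fin 3) ℝ) (hJ : IsUnit J) (i : Fin 3) :
    (Tq r c i).rank ≤ 2 ∧
    (Matrix.of fun (x : Fin 3 ⊕ Fin 3) (p : Fin 6 × Fin 6) =>
        (((Matrix.fromBlocks (0 : Matrix (Fin 3) (Fin 3) ℝ) 1 0 0) ^ (p.1 : ℕ) *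
            (b • Matrix.fromRows (0 : Matrix (Fin 3) (Fin 6) ℝ)
              (J⁻¹ * Tq r c i)) :
          Matrix (Fin 3 ⊕ Fin 3) (Fin 6) ℝ)) x p.2).rank < 6 := by
  obtain ⟨v, hv, hvT⟩ := exists_left_null r c hr hc i
  have hJd : IsUnit J.det := (Matrix.isUnit_iff_isUnit_det J).mp hJ
  have hJJ : J * J⁻¹ = 1 := Matrix.mul_nonsing_inv J hJd
  constructor
  · have := aux_rank (Tq r c i) v hv hvT
    simpa using Nat.lt_succ_iff.mp (by simpa using this)
  · set A : Matrix (Fin 3 ⊕ Fin 3) (Fin 3 ⊕ Fin 3) ℝ := Matrix.fromBlocks 0 1 0 0 with hA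
    set B : Matrix (Fin 3 ⊕ Fin 3) (Fin 6) ℝ :=
      b • Matrix.fromRows (0 : Matrix (Fin 3) (Fin 6) ℝ) (J⁻¹ * Tq r c i) with hBdef
    set u : Fin 3 → ℝ := v ᵥ* J with hu
    have huv : u ᵥ* J⁻¹ = v := by
      rw [hu, Matrix.vecMul_vecMul, hJJ, Matrix.vecMul_one]
    have hune : u ≠ 0 := by
      intro h
      apply hv
      rw [← huv, h, Matrix.zero_vecMul]
    have huT : u ᵥ* (J⁻¹ * Tq r c i) = 0 := by
      rw [← Matrix.vecMul_vecMul, huv, hvT]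
    set w : Fin 3 ⊕ Fin 3 → ℝ := Sum.elim u u with hw
    have hwne : w ≠ 0 := by
      intro h
      apply hune
      funext k
      exact congrFun h (Sum.inl k)
    have hB : ∀ (a y : Fin 3 → ℝ), y ᵥ* (J⁻¹ * Tq r c i) = 0 →
        (Sum.elim a y) ᵥ* B = 0 := by
      intro a y hy
      have hs : ∀ (x : Fin 3 ⊕ Fin 3 → ℝ) (M : Matrix (Fin 3 ⊕ Fin 3) (Fin 6) ℝ),
          x ᵥ* (b • M) = b • (x ᵥ* M) := by
        intro x M
        funext j
        simp [Matrix.vecMul, dotProduct, Matrix.smul_apply, Finset.mul_sum, mul_add,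
          mul_left_comm]
      rw [hBdef, hs, Matrix.sumElim_vecMul_fromRows, hy,
        Matrix.vecMul_zero, add_zero, smul_zero]
    have hwA : w ᵥ* A = Sum.elim (0 : Fin 3 → ℝ) u := by
      rw [hA, Matrix.vecMul_fromBlocks]
      simp [hw]
    have hA2 : A ^ 2 = 0 := by
      rw [hA, pow_two, Matrix.fromBlocks_multiply]
      simp
    have key : w ᵥ* (Matrix.of fun (x : Fin 3 ⊕ Fin 3) (p : Fin 6 × Fin 6) =>
        ((A ^ (p.1 : ℕ) * B) : Matrix (Fin 3 ⊕ Fin 3) (Fin 6) ℝ) x p.2) = 0 := by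
      funext p
      obtain ⟨k, j⟩ := p
      have hgen : ∀ n : ℕ, w ᵥ* (A ^ n * B) = 0 := by
        intro n
        match n with
        | 0 => rw [pow_zero, Matrix.one_mul, hw]; exact hB u u huT
        | 1 => rw [pow_one, ← Matrix.vecMul_vecMul, hwA]; exact hB 0 u huT
        | (n + 2) =>
          rw [add_comm, pow_add, hA2]; simp
      have : (w ᵥ* (A ^ (k : ℕ) * B)) j = 0 := by rw [hgen]; rfl
      simpa [Matrix.vecMul, dotProduct, Matrix.of_apply] using this
    have := aux_rank _ w hwne key
    simp at this; exact this
end
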